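/- The number Z_n of skew-symmetric (n,n)-clans is given by Z_n = Σ_{k=0}^{n} 2^{n−k}·C(n,k)·a_k. -/

import Mathlib

/-- A skew-symmetric `(n,n)`-clan, encoded (via the standard bijection with signed
involutions) as a pair `(σ, s)` where `σ` is an involution of the `2n` positions whose
2-cycles are the pairs of positions carrying matching natural numbers, and `s` records
the signs at the fixed points (`true` = `+`, `false` = `−`; `s` is normalized to `true`
on non-fixed points).  The conditions say: `σ` is an involution; `s` is normalized;
there are equally many `+`'s and `−`'s among the sign symbols; and the clan equals its
reverse with all signs interchanged (`Fin.rev` is the reflection `i ↦ 2n+1−i`). -/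
def IsSkewClan (n : ℕ) (σ : Equiv.Perm (Fin (2 * n))) (s : Fin (2 * n) → Bool) : Prop :=
  Function.Involutive σ ∧
  (∀ i, σ i ≠ i → s i = true) ∧
  (Finset.univ.filter (fun i => σ i = i ∧ s i = true)).card =
    (Finset.univ.filter (fun i => σ i = i ∧ s i = false)).card ∧
  (∀ i, σ (Fin.rev i) = Fin.rev (σ i)) ∧
  (∀ i, σ i = i → s (Fin.rev i) = !(s i))

/-- `Z_n`, the number of skew-symmetric `(n,n)`-clans. -/
noncomputable def Znum (n : ℕ) : ℕ :=
  Nat.card {p : Equiv.Perm (Fin (2 * n)) × (Fin (2 * n) → Bool) // IsSkewClan n p.1 p.2}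

/-- `a_k := Σ_{b=0}^{⌊k/2⌋} C(k,2b)·(2b)!/b!` (the division is exact). -/
def aseq (k : ℕ) : ℕ :=
  ∑ b ∈ Finset.range (k / 2 + 1),
    Nat.choose k (2 * b) * (Nat.factorial (2 * b) / Nat.factorial b)


/- ## Auxiliary development -/

def SCe {n : ℕ} (i : Fin n) : Fin (2 * n) := ⟨i.1, by omega⟩

def SCg {n : ℕ} (σ : Fin (2 * n) → Fin (2 * n)) (s : Fin (2 * n) → Bool) (i : Fin n) : Fin 5 :=
  if (σ (SCe i)).1 = i.1 then (if s (SCe i) then 0 else 1)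
  else if (σ (SCe i)).1 = 2 * n - 1 - i.1 then 2
  else if ((σ (SCe i)).1 < n ∧ i.1 < (σ (SCe i)).1) ∨
      (n ≤ (σ (SCe i)).1 ∧ 2 * n - 1 - (σ (SCe i)).1 < i.1) then 3 else 4

def SCpi {n : ℕ} (σ : Fin (2 * n) → Fin (2 * n)) (i : Fin n) : Fin n :=
  if h : (σ (SCe i)).1 < n then ⟨(σ (SCe i)).1, h⟩
  else ⟨2 * n - 1 - (σ (SCe i)).1, by have := (σ (SCe i)).2; have := i.2; omega⟩

section
variable {n : ℕ} (σ : Fin (2 * n) → Fin (2 * n)) (s : Fin (2 * n) → Bool)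

@[simp] lemma SCe_val (i : Fin n) : (SCe i).1 = i.1 := rfl

lemma SCpi_val (i : Fin n) :
    (SCpi σ i).1 = if (σ (SCe i)).1 < n then (σ (SCe i)).1 else 2 * n - 1 - (σ (SCe i)).1 := by
  unfold SCpi; split <;> rfl

lemma SCe_pi (i : Fin n) :
    SCe (SCpi σ i) = if (σ (SCe i)).1 < n then σ (SCe i) else (σ (SCe i)).rev := by
  have h2 := (σ (SCe i)).2
  apply Fin.ext
  rw [SCe_val, SCpi_val]
  split <;> simp [Fin.val_rev] <;> omega

variable (h1 : Function.Involutive σ) (h4 : ∀ x, σ (Fin.rev x) = Fin.rev (σ x))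

include h1 h4 in
lemma enc_key (i : Fin n) :
    σ (SCe (SCpi σ i)) = if (σ (SCe i)).1 < n then SCe i else (SCe i).rev := by
  rw [SCe_pi]
  by_cases hc : (σ (SCe i)).1 < n
  · rw [if_pos hc, if_pos hc, h1]
  · rw [if_neg hc, if_neg hc, ← h4, h1]

include h1 h4 in
lemma enc_key_val (i : Fin n) :
    (σ (SCe (SCpi σ i))).1 = if (σ (SCe i)).1 < n then i.1 else 2 * n - 1 - i.1 := by
  rw [enc_key σ h1 h4]
  have := i.2
  split <;> simp [Fin.val_rev] <;> omega

include h1 h4 in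
lemma enc_pi_invol (i : Fin n) : SCpi σ (SCpi σ i) = i := by
  have hv := enc_key_val σ h1 h4 i
  have hi := i.2
  apply Fin.ext
  rw [SCpi_val, hv]
  by_cases hc : (σ (SCe i)).1 < n <;> simp only [hc, if_true, if_false] <;> split_ifs <;> omega

include h1 h4 in
lemma enc_g34 (i : Fin n) : SCg σ s i = 3 → SCg σ s (SCpi σ i) = 4 := by
  intro h3
  have hv := enc_key_val σ h1 h4 i
  have hp := SCpi_val σ i
  have hi := i.2
  have hc2 := (σ (SCe i)).2
  unfold SCg at h3 ⊢
  split_ifs at h3 with hfix hs hswap hhead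
  · simp at h3
  · simp at h3
  · simp at h3
  · -- cross, head
    rw [hv, hp]
    by_cases hc : (σ (SCe i)).1 < n <;>
      simp only [hc, if_true, if_false] <;>
      split_ifs <;> first | rfl | omega | (exfalso; omega)
  · simp at h3

include h1 h4 in
lemma enc_g43 (i : Fin n) : SCg σ s i = 4 → SCg σ s (SCpi σ i) = 3 := by
  intro h3
  have hv := enc_key_val σ h1 h4 i
  have hp := SCpi_val σ i
  have hi := i.2
  have hc2 := (σ (SCe i)).2
  unfold SCg at h3 ⊢
  split_ifs at h3 with hfix hs hswap hhead
  · simp at h3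
  · simp at h3
  · simp at h3
  · simp at h3
  · rw [hv, hp]
    by_cases hc : (σ (SCe i)).1 < n <;>
      simp only [hc, if_true, if_false] <;>
      split_ifs <;> first | rfl | omega | (exfalso; omega)

lemma enc_pi_id (i : Fin n) : SCg σ s i ≠ 3 → SCg σ s i ≠ 4 → SCpi σ i = i := by
  intro hg3 hg4
  have hi := i.2
  have hc2 := (σ (SCe i)).2
  unfold SCg at hg3 hg4
  apply Fin.ext
  rw [SCpi_val]
  split_ifs at hg3 hg4 with hfix hs hswap hhead <;> first | omega | (exfalso; exact hg3 rfl) | (exfalso; exact hg4 rfl) | split_ifs <;> omega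

end

def IsModel (n : ℕ) (g : Fin n → Fin 5) (π : Fin n → Fin n) : Prop :=
  (∀ i, π (π i) = i) ∧ (∀ i, g i = 3 → g (π i) = 4) ∧ (∀ i, g i = 4 → g (π i) = 3) ∧
  (∀ i, g i ≠ 3 → g i ≠ 4 → π i = i)

def SCF {n : ℕ} (g : Fin n → Fin 5) (π : Fin n → Fin n) (i : Fin n) : Fin (2 * n) :=
  if g i = 0 ∨ g i = 1 then SCe i
  else if g i = 2 then (SCe i).rev
  else if (g i = 3 ∧ i < π i) ∨ (g i = 4 ∧ π i < i) then SCe (π i) else (SCe (π i)).rev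

def SCsigma {n : ℕ} (g : Fin n → Fin 5) (π : Fin n → Fin n) (x : Fin (2 * n)) : Fin (2 * n) :=
  if h : x.1 < n then SCF g π ⟨x.1, h⟩
  else (SCF g π ⟨2 * n - 1 - x.1, by have := x.2; omega⟩).rev

def SCs {n : ℕ} (g : Fin n → Fin 5) (x : Fin (2 * n)) : Bool :=
  if h : x.1 < n then (if g ⟨x.1, h⟩ = 1 then false else true)
  else (if g ⟨2 * n - 1 - x.1, by have := x.2; omega⟩ = 0 then false else true)


lemma fin5 (x : Fin 5) : x = 0 ∨ x = 1 ∨ x = 2 ∨ x = 3 ∨ x = 4 := by revert x; decide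

section
variable {n : ℕ} (g : Fin n → Fin 5) (π : Fin n → Fin n)

@[simp] lemma SCe_rev_val (i : Fin n) : ((SCe i).rev).1 = 2 * n - 1 - i.1 := by
  rw [Fin.val_rev, SCe_val]; omega

lemma L_e (j : Fin n) : SCsigma g π (SCe j) = SCF g π j := by
  unfold SCsigma
  rw [dif_pos (show (SCe j).1 < n from j.2)]
  rfl

lemma L_er (j : Fin n) : SCsigma g π ((SCe j).rev) = (SCF g π j).rev := by
  have hj := j.2
  unfold SCsigma
  rw [dif_neg (show ¬ ((SCe j).rev).1 < n by rw [SCe_rev_val]; omega)]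
  congr 2
  apply Fin.ext
  simp only [Fin.val_mk, SCe_rev_val]
  omega

lemma SCs_e (j : Fin n) : SCs g (SCe j) = (if g j = 1 then false else true) := by
  unfold SCs
  rw [dif_pos (show (SCe j).1 < n from j.2)]
  rfl

lemma SCs_er (j : Fin n) :
    SCs g ((SCe j).rev) = (if g j = 0 then false else true) := by
  have hj := j.2
  unfold SCs
  rw [dif_neg (show ¬ ((SCe j).rev).1 < n by rw [SCe_rev_val]; omega)]
  have hA : ∀ pf, (⟨2 * n - 1 - ((SCe j).rev).1, pf⟩ : Fin n) = j := fun pf =>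
    Fin.ext (by simp only [Fin.val_mk, SCe_rev_val]; omega)
  rw [hA]

lemma dec_equiv (x : Fin (2 * n)) : SCsigma g π (Fin.rev x) = Fin.rev (SCsigma g π x) := by
  obtain ⟨xv, hx2⟩ := x
  by_cases hx : xv < n
  · have hxe : (⟨xv, hx2⟩ : Fin (2 * n)) = SCe ⟨xv, hx⟩ := rfl
    rw [hxe, L_e, ← L_er]
  · have hre : (⟨xv, hx2⟩ : Fin (2 * n)) = (SCe ⟨2 * n - 1 - xv, by omega⟩).rev := by
      apply Fin.ext; simp only [Fin.val_mk, SCe_rev_val]; omega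
    rw [hre, L_er, Fin.rev_rev, Fin.rev_rev, L_e]

variable (hm : IsModel n g π)

include hm in
lemma pi_ne (i : Fin n) : g i = 3 ∨ g i = 4 → π i ≠ i := by
  obtain ⟨hm1, hm2, hm3, hm4⟩ := hm
  rintro (h3 | h4) he
  · have := hm2 i h3; rw [he, h3] at this; simp at this
  · have := hm3 i h4; rw [he, h4] at this; simp at this

include hm in
lemma dec_key (i : Fin n) : SCsigma g π (SCF g π i) = SCe i := by
  obtain ⟨hm1, hm2, hm3, hm4⟩ := hm
  rcases fin5 (g i) with h | h | h | h | h
  · rw [show SCF g π i = SCe i by unfold SCF; rw [if_pos (Or.inl h)], L_e,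
      show SCF g π i = SCe i by unfold SCF; rw [if_pos (Or.inl h)]]
  · rw [show SCF g π i = SCe i by unfold SCF; rw [if_pos (Or.inr h)], L_e,
      show SCF g π i = SCe i by unfold SCF; rw [if_pos (Or.inr h)]]
  · have hF : SCF g π i = (SCe i).rev := by
      unfold SCF; rw [if_neg (by simp [h]), if_pos h]
    rw [hF, L_er, hF, Fin.rev_rev]
  · have hne : π i ≠ i := pi_ne g π ⟨hm1, hm2, hm3, hm4⟩ i (Or.inl h)
    have h4 : g (π i) = 4 := hm2 i h
    by_cases hlt : i < π i
    · have hF : SCF g π i = SCe (π i) := by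
        unfold SCF; rw [if_neg (by simp [h]), if_neg (by simp [h]), if_pos (Or.inl ⟨h, hlt⟩)]
      have hF2 : SCF g π (π i) = SCe i := by
        unfold SCF
        rw [if_neg (by simp [h4]), if_neg (by simp [h4]),
          if_pos (Or.inr ⟨h4, by rw [hm1]; exact hlt⟩), hm1]
      rw [hF, L_e, hF2]
    · have hlt' : π i < i := lt_of_le_of_ne (not_lt.mp hlt) hne
      have hF : SCF g π i = (SCe (π i)).rev := by
        unfold SCF
        rw [if_neg (by simp [h]), if_neg (by simp [h]), if_neg ?_]
        rintro (⟨h', h''⟩ | ⟨h', h''⟩)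
        · exact hlt h''
        · rw [h] at h'; exact absurd h' (by decide)
      have hF2 : SCF g π (π i) = (SCe i).rev := by
        unfold SCF
        rw [if_neg (by simp [h4]), if_neg (by simp [h4]), if_neg ?_, hm1]
        rintro (⟨h', h''⟩ | ⟨h', h''⟩)
        · rw [h4] at h'; exact absurd h' (by decide)
        · rw [hm1] at h''; exact hlt h''
      rw [hF, L_er, hF2, Fin.rev_rev]
  · have hne : π i ≠ i := pi_ne g π ⟨hm1, hm2, hm3, hm4⟩ i (Or.inr h)
    have h3 : g (π i) = 3 := hm3 i h
    by_cases hlt : π i < i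
    · have hF : SCF g π i = SCe (π i) := by
        unfold SCF; rw [if_neg (by simp [h]), if_neg (by simp [h]), if_pos (Or.inr ⟨h, hlt⟩)]
      have hF2 : SCF g π (π i) = SCe i := by
        unfold SCF
        rw [if_neg (by simp [h3]), if_neg (by simp [h3]),
          if_pos (Or.inl ⟨h3, by rw [hm1]; exact hlt⟩), hm1]
      rw [hF, L_e, hF2]
    · have hlt' : i < π i := lt_of_le_of_ne (not_lt.mp hlt) (Ne.symm hne)
      have hF : SCF g π i = (SCe (π i)).rev := by
        unfold SCF
        rw [if_neg (by simp [h]), if_neg (by simp [h]), if_neg ?_]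
        rintro (⟨h', h''⟩ | ⟨h', h''⟩)
        · rw [h] at h'; exact absurd h' (by decide)
        · exact hlt h''
      have hF2 : SCF g π (π i) = (SCe i).rev := by
        unfold SCF
        rw [if_neg (by simp [h3]), if_neg (by simp [h3]), if_neg ?_, hm1]
        rintro (⟨h', h''⟩ | ⟨h', h''⟩)
        · rw [hm1] at h''; exact hlt h''
        · rw [h3] at h'; exact absurd h' (by decide)
      rw [hF, L_er, hF2, Fin.rev_rev]

include hm in
lemma dec_invol : Function.Involutive (SCsigma g π) := by
  intro x
  obtain ⟨xv, hx2⟩ := x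
  by_cases hx : xv < n
  · have hxe : (⟨xv, hx2⟩ : Fin (2 * n)) = SCe ⟨xv, hx⟩ := rfl
    rw [hxe, L_e, dec_key g π hm]
  · have hre : (⟨xv, hx2⟩ : Fin (2 * n)) = (SCe ⟨2 * n - 1 - xv, by omega⟩).rev := by
      apply Fin.ext; simp only [Fin.val_mk, SCe_rev_val]; omega
    rw [hre, L_er]
    rw [show (SCF g π ⟨2 * n - 1 - xv, by omega⟩).rev
        = Fin.rev (SCF g π ⟨2 * n - 1 - xv, by omega⟩) from rfl, dec_equiv, dec_key g π hm]

include hm in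
lemma F_fix (i : Fin n) : SCF g π i = SCe i → g i = 0 ∨ g i = 1 := by
  intro hF
  have hi := i.2
  rcases fin5 (g i) with h | h | h | h | h
  · exact Or.inl h
  · exact Or.inr h
  · exfalso
    rw [show SCF g π i = (SCe i).rev by unfold SCF; rw [if_neg (by simp [h]), if_pos h]] at hF
    have hv := congrArg Fin.val hF
    simp only [SCe_val, SCe_rev_val] at hv
    omega
  · exfalso
    have hne : π i ≠ i := pi_ne g π hm i (Or.inl h)
    have hne' : (π i).1 ≠ i.1 := fun hc => hne (Fin.ext hc)
    have hp := (π i).2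
    unfold SCF at hF
    rw [if_neg (by simp [h]), if_neg (by simp [h])] at hF
    split_ifs at hF
    all_goals have hv := congrArg Fin.val hF
    all_goals simp only [SCe_val, SCe_rev_val] at hv
    all_goals omega
  · exfalso
    have hne : π i ≠ i := pi_ne g π hm i (Or.inr h)
    have hne' : (π i).1 ≠ i.1 := fun hc => hne (Fin.ext hc)
    have hp := (π i).2
    unfold SCF at hF
    rw [if_neg (by simp [h]), if_neg (by simp [h])] at hF
    split_ifs at hF
    all_goals have hv := congrArg Fin.val hF
    all_goals simp only [SCe_val, SCe_rev_val] at hv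
    all_goals omega

lemma dec_norm (x : Fin (2 * n)) : SCsigma g π x ≠ x → SCs g x = true := by
  intro hne
  obtain ⟨xv, hx2⟩ := x
  by_cases hx : xv < n
  · have hxe : (⟨xv, hx2⟩ : Fin (2 * n)) = SCe ⟨xv, hx⟩ := rfl
    rw [hxe, SCs_e]
    split_ifs with h1
    · exfalso; apply hne
      rw [hxe, L_e]
      unfold SCF; rw [if_pos (Or.inr h1), ← hxe]
    · rfl
  · have hre : (⟨xv, hx2⟩ : Fin (2 * n)) = (SCe ⟨2 * n - 1 - xv, by omega⟩).rev := by
      apply Fin.ext; simp only [Fin.val_mk, SCe_rev_val]; omega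
    rw [hre, SCs_er]
    split_ifs with h0
    · exfalso; apply hne
      rw [hre, L_er]
      congr 1
      unfold SCF; rw [if_pos (Or.inl h0)]
    · rfl

include hm in
lemma dec_flip (x : Fin (2 * n)) : SCsigma g π x = x → SCs g (Fin.rev x) = !(SCs g x) := by
  intro hfix
  obtain ⟨xv, hx2⟩ := x
  by_cases hx : xv < n
  · have hxe : (⟨xv, hx2⟩ : Fin (2 * n)) = SCe ⟨xv, hx⟩ := rfl
    rw [hxe, L_e] at hfix
    have h01 := F_fix g π hm _ hfix
    rw [hxe, SCs_e, SCs_er]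
    rcases h01 with h | h <;> simp [h]
  · have hre : (⟨xv, hx2⟩ : Fin (2 * n)) = (SCe ⟨2 * n - 1 - xv, by omega⟩).rev := by
      apply Fin.ext; simp only [Fin.val_mk, SCe_rev_val]; omega
    rw [hre, L_er] at hfix
    have hfix' : SCF g π ⟨2 * n - 1 - xv, by omega⟩ = SCe ⟨2 * n - 1 - xv, by omega⟩ := by
      have := congrArg Fin.rev hfix
      rwa [Fin.rev_rev, Fin.rev_rev] at this
    have h01 := F_fix g π hm _ hfix'
    rw [hre, Fin.rev_rev, SCs_e, SCs_er]
    rcases h01 with h | h <;> simp [h]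
end

/- ## Round trips -/

section RT
variable {n : ℕ} (σ : Fin (2 * n) → Fin (2 * n)) (s : Fin (2 * n) → Bool)

lemma F_encode (i : Fin n) : SCF (SCg σ s) (SCpi σ) i = σ (SCe i) := by
  have hi := i.2
  have hc2 := (σ (SCe i)).2
  have hp := SCpi_val σ i
  by_cases hfix : (σ (SCe i)).1 = i.1
  · have gv : SCg σ s i = if s (SCe i) then 0 else 1 := by unfold SCg; rw [if_pos hfix]
    have h01 : SCg σ s i = 0 ∨ SCg σ s i = 1 := by rw [gv]; split_ifs <;> simp
    have hF : SCF (SCg σ s) (SCpi σ) i = SCe i := by unfold SCF; rw [if_pos h01]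
    rw [hF]; apply Fin.ext; rw [SCe_val]; omega
  · by_cases hswap : (σ (SCe i)).1 = 2 * n - 1 - i.1
    · have gv : SCg σ s i = 2 := by unfold SCg; rw [if_neg hfix, if_pos hswap]
      have hF : SCF (SCg σ s) (SCpi σ) i = (SCe i).rev := by
        unfold SCF; rw [if_neg (by simp [gv]), if_pos gv]
      rw [hF]; apply Fin.ext; rw [SCe_rev_val]; omega
    · by_cases hh : ((σ (SCe i)).1 < n ∧ i.1 < (σ (SCe i)).1) ∨
          (n ≤ (σ (SCe i)).1 ∧ 2 * n - 1 - (σ (SCe i)).1 < i.1)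
      · have gv : SCg σ s i = 3 := by unfold SCg; rw [if_neg hfix, if_neg hswap, if_pos hh]
        rcases hh with ⟨hcn, hlt⟩ | ⟨hcn, hlt⟩
        · have hltf : i < SCpi σ i := by rw [Fin.lt_def, hp, if_pos hcn]; exact hlt
          have hF : SCF (SCg σ s) (SCpi σ) i = SCe (SCpi σ i) := by
            unfold SCF
            rw [if_neg (by simp [gv]), if_neg (by simp [gv]), if_pos (Or.inl ⟨gv, hltf⟩)]
          rw [hF]; apply Fin.ext; rw [SCe_val, hp, if_pos hcn]
        · have hF : SCF (SCg σ s) (SCpi σ) i = (SCe (SCpi σ i)).rev := by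
            unfold SCF
            rw [if_neg (by simp [gv]), if_neg (by simp [gv]), if_neg ?_]
            rintro (⟨-, h'⟩ | ⟨h', -⟩)
            · rw [Fin.lt_def, hp, if_neg (by omega)] at h'; omega
            · rw [gv] at h'; exact absurd h' (by decide)
          rw [hF]; apply Fin.ext; rw [SCe_rev_val, hp, if_neg (by omega)]; omega
      · have gv : SCg σ s i = 4 := by unfold SCg; rw [if_neg hfix, if_neg hswap, if_neg hh]
        by_cases hcn : (σ (SCe i)).1 < n
        · have hltf : SCpi σ i < i := by rw [Fin.lt_def, hp, if_pos hcn]; omega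
          have hF : SCF (SCg σ s) (SCpi σ) i = SCe (SCpi σ i) := by
            unfold SCF
            rw [if_neg (by simp [gv]), if_neg (by simp [gv]), if_pos (Or.inr ⟨gv, hltf⟩)]
          rw [hF]; apply Fin.ext; rw [SCe_val, hp, if_pos hcn]
        · have hF : SCF (SCg σ s) (SCpi σ) i = (SCe (SCpi σ i)).rev := by
            unfold SCF
            rw [if_neg (by simp [gv]), if_neg (by simp [gv]), if_neg ?_]
            rintro (⟨h', -⟩ | ⟨-, h'⟩)
            · rw [gv] at h'; exact absurd h' (by decide)
            · rw [Fin.lt_def, hp, if_neg hcn] at h'; omega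
          rw [hF]; apply Fin.ext; rw [SCe_rev_val, hp, if_neg hcn]; omega

lemma sigma_encode (h4 : ∀ x, σ (Fin.rev x) = Fin.rev (σ x)) (x : Fin (2 * n)) :
    SCsigma (SCg σ s) (SCpi σ) x = σ x := by
  obtain ⟨xv, hx2⟩ := x
  by_cases hx : xv < n
  · have hxe : (⟨xv, hx2⟩ : Fin (2 * n)) = SCe ⟨xv, hx⟩ := rfl
    rw [hxe, L_e, F_encode]
  · have hre : (⟨xv, hx2⟩ : Fin (2 * n)) = (SCe ⟨2 * n - 1 - xv, by omega⟩).rev := by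
      apply Fin.ext; simp only [Fin.val_mk, SCe_rev_val]; omega
    rw [hre, L_er, F_encode]
    exact (h4 (SCe ⟨2 * n - 1 - xv, by omega⟩)).symm

lemma s_encode (h2 : ∀ x, σ x ≠ x → s x = true) (h4 : ∀ x, σ (Fin.rev x) = Fin.rev (σ x))
    (h5 : ∀ x, σ x = x → s (Fin.rev x) = !(s x)) (x : Fin (2 * n)) :
    SCs (SCg σ s) x = s x := by
  obtain ⟨xv, hx2⟩ := x
  by_cases hx : xv < n
  · have hxe : (⟨xv, hx2⟩ : Fin (2 * n)) = SCe ⟨xv, hx⟩ := rfl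
    rw [hxe, SCs_e]
    set i : Fin n := ⟨xv, hx⟩
    by_cases hfix : (σ (SCe i)).1 = i.1
    · have gv : SCg σ s i = if s (SCe i) then 0 else 1 := by unfold SCg; rw [if_pos hfix]
      rw [gv]
      by_cases hs : s (SCe i)
      · rw [if_pos hs, if_neg (by decide), hs]
      · rw [if_neg hs, if_pos rfl]
        simp only [Bool.not_eq_true] at hs
        rw [hs]
    · have hnot : SCg σ s i ≠ 1 := by
        unfold SCg; rw [if_neg hfix]; split_ifs <;> decide
      rw [if_neg hnot]
      exact (h2 (SCe i) (fun he => hfix (congrArg Fin.val he))).symm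
  · have hre : (⟨xv, hx2⟩ : Fin (2 * n)) = (SCe ⟨2 * n - 1 - xv, by omega⟩).rev := by
      apply Fin.ext; simp only [Fin.val_mk, SCe_rev_val]; omega
    rw [hre, SCs_er]
    set j : Fin n := ⟨2 * n - 1 - xv, by omega⟩
    by_cases hfix : (σ (SCe j)).1 = j.1
    · have hfix' : σ (SCe j) = SCe j := Fin.ext (by rw [SCe_val]; exact hfix)
      have h5' := h5 (SCe j) hfix'
      have gv : SCg σ s j = if s (SCe j) then 0 else 1 := by unfold SCg; rw [if_pos hfix]
      rw [gv]
      by_cases hs : s (SCe j)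
      · rw [if_pos hs, if_pos rfl]
        rw [hs] at h5'; simp only [Bool.not_true] at h5'
        exact h5'.symm
      · simp only [Bool.not_eq_true] at hs
        rw [hs] at h5' ⊢; simp only [Bool.not_false] at h5'
        rw [if_neg (by decide), h5']
    · have hnot : SCg σ s j ≠ 0 := by
        unfold SCg; rw [if_neg hfix]; split_ifs <;> decide
      rw [if_neg hnot]
      refine (h2 ((SCe j).rev) (fun he => hfix ?_)).symm
      have ha := h4 (SCe j)
      rw [he] at ha
      have hb : σ (SCe j) = SCe j := Fin.rev_injective ha.symm
      exact congrArg Fin.val hb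
end RT

section RT2
variable {n : ℕ} (g : Fin n → Fin 5) (π : Fin n → Fin n) (hm : IsModel n g π)

include hm in
lemma g_decode (i : Fin n) : SCg (SCsigma g π) (SCs g) i = g i := by
  obtain ⟨hm1, hm2, hm3, hm4⟩ := hm
  have hi := i.2
  have hpv := (π i).2
  unfold SCg
  rw [SCs_e]
  simp only [L_e g π]
  rcases fin5 (g i) with h | h | h | h | h
  · have hF : SCF g π i = SCe i := by unfold SCF; rw [if_pos (Or.inl h)]
    rw [hF, SCe_val, if_pos rfl, h]; decide
  · have hF : SCF g π i = SCe i := by unfold SCF; rw [if_pos (Or.inr h)]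
    rw [hF, SCe_val, if_pos rfl, h]; decide
  · have hF : SCF g π i = (SCe i).rev := by
      unfold SCF; rw [if_neg (by simp [h]), if_pos h]
    rw [hF, SCe_rev_val, if_neg (by omega), if_pos rfl, h]
  · have hne : π i ≠ i := pi_ne g π ⟨hm1, hm2, hm3, hm4⟩ i (Or.inl h)
    have hnev : (π i).1 ≠ i.1 := fun hc => hne (Fin.ext hc)
    by_cases hlt : i < π i
    · have hltv : i.1 < (π i).1 := hlt
      have hF : SCF g π i = SCe (π i) := by
        unfold SCF; rw [if_neg (by simp [h]), if_neg (by simp [h]), if_pos (Or.inl ⟨h, hlt⟩)]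
      rw [hF, SCe_val, if_neg (by omega), if_neg (by omega), if_pos (Or.inl ⟨hpv, hltv⟩), h]
    · have hlt' : π i < i := lt_of_le_of_ne (not_lt.mp hlt) hne
      have hltv : (π i).1 < i.1 := hlt'
      have hF : SCF g π i = (SCe (π i)).rev := by
        unfold SCF
        rw [if_neg (by simp [h]), if_neg (by simp [h]), if_neg ?_]
        rintro (⟨-, h'⟩ | ⟨h', -⟩)
        · exact hlt h'
        · rw [h] at h'; exact absurd h' (by decide)
      rw [hF, SCe_rev_val, if_neg (by omega), if_neg (by omega),
        if_pos (Or.inr ⟨by omega, by omega⟩), h]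
  · have hne : π i ≠ i := pi_ne g π ⟨hm1, hm2, hm3, hm4⟩ i (Or.inr h)
    have hnev : (π i).1 ≠ i.1 := fun hc => hne (Fin.ext hc)
    by_cases hlt : π i < i
    · have hltv : (π i).1 < i.1 := hlt
      have hF : SCF g π i = SCe (π i) := by
        unfold SCF; rw [if_neg (by simp [h]), if_neg (by simp [h]), if_pos (Or.inr ⟨h, hlt⟩)]
      rw [hF, SCe_val, if_neg (by omega), if_neg (by omega), if_neg (by omega), h]
    · have hlt' : i < π i := lt_of_le_of_ne (not_lt.mp hlt) (Ne.symm hne)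
      have hltv : i.1 < (π i).1 := hlt'
      have hF : SCF g π i = (SCe (π i)).rev := by
        unfold SCF
        rw [if_neg (by simp [h]), if_neg (by simp [h]), if_neg ?_]
        rintro (⟨h', -⟩ | ⟨-, h'⟩)
        · rw [h] at h'; exact absurd h' (by decide)
        · exact hlt h'
      rw [hF, SCe_rev_val, if_neg (by omega), if_neg (by omega), if_neg (by omega), h]

include hm in
lemma pi_decode (i : Fin n) : SCpi (SCsigma g π) i = π i := by
  obtain ⟨hm1, hm2, hm3, hm4⟩ := hm
  have hi := i.2
  have hpv := (π i).2
  apply Fin.ext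
  rw [SCpi_val]
  simp only [L_e g π]
  rcases fin5 (g i) with h | h | h | h | h
  · have hF : SCF g π i = SCe i := by unfold SCF; rw [if_pos (Or.inl h)]
    have hπ : (π i).1 = i.1 :=
      congrArg Fin.val (hm4 i (by rw [h]; decide) (by rw [h]; decide))
    rw [hF, SCe_val]
    split_ifs <;> omega
  · have hF : SCF g π i = SCe i := by unfold SCF; rw [if_pos (Or.inr h)]
    have hπ : (π i).1 = i.1 :=
      congrArg Fin.val (hm4 i (by rw [h]; decide) (by rw [h]; decide))
    rw [hF, SCe_val]
    split_ifs <;> omega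
  · have hF : SCF g π i = (SCe i).rev := by
      unfold SCF; rw [if_neg (by simp [h]), if_pos h]
    have hπ : (π i).1 = i.1 :=
      congrArg Fin.val (hm4 i (by rw [h]; decide) (by rw [h]; decide))
    rw [hF, SCe_rev_val]
    split_ifs <;> omega
  · have hne : π i ≠ i := pi_ne g π ⟨hm1, hm2, hm3, hm4⟩ i (Or.inl h)
    by_cases hlt : i < π i
    · have hF : SCF g π i = SCe (π i) := by
        unfold SCF; rw [if_neg (by simp [h]), if_neg (by simp [h]), if_pos (Or.inl ⟨h, hlt⟩)]
      rw [hF, SCe_val]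
      split_ifs <;> omega
    · have hF : SCF g π i = (SCe (π i)).rev := by
        unfold SCF
        rw [if_neg (by simp [h]), if_neg (by simp [h]), if_neg ?_]
        rintro (⟨-, h'⟩ | ⟨h', -⟩)
        · exact hlt h'
        · rw [h] at h'; exact absurd h' (by decide)
      rw [hF, SCe_rev_val]
      split_ifs <;> omega
  · have hne : π i ≠ i := pi_ne g π ⟨hm1, hm2, hm3, hm4⟩ i (Or.inr h)
    by_cases hlt : π i < i
    · have hF : SCF g π i = SCe (π i) := by
        unfold SCF; rw [if_neg (by simp [h]), if_neg (by simp [h]), if_pos (Or.inr ⟨h, hlt⟩)]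
      rw [hF, SCe_val]
      split_ifs <;> omega
    · have hF : SCF g π i = (SCe (π i)).rev := by
        unfold SCF
        rw [if_neg (by simp [h]), if_neg (by simp [h]), if_neg ?_]
        rintro (⟨h', -⟩ | ⟨-, h'⟩)
        · rw [h] at h'; exact absurd h' (by decide)
        · exact hlt h'
      rw [hF, SCe_rev_val]
      split_ifs <;> omega
end RT2

/- ## Assembly of the bijection -/

instance (n : ℕ) (g : Fin n → Fin 5) (π : Fin n → Fin n) : Decidable (IsModel n g π) := by
  unfold IsModel; infer_instance

def Model (n : ℕ) : Type :=
  {q : (Fin n → Fin 5) × (Fin n → Fin n) // IsModel n q.1 q.2}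

instance (n : ℕ) : Fintype (Model n) := by unfold Model; infer_instance

lemma balance {n : ℕ} (σ : Equiv.Perm (Fin (2 * n))) (s : Fin (2 * n) → Bool)
    (h4 : ∀ i, σ (Fin.rev i) = Fin.rev (σ i))
    (h5 : ∀ i, σ i = i → s (Fin.rev i) = !(s i)) :
    (Finset.univ.filter (fun i => σ i = i ∧ s i = true)).card =
      (Finset.univ.filter (fun i => σ i = i ∧ s i = false)).card := by
  apply Finset.card_bij' (fun a _ => Fin.rev a) (fun a _ => Fin.rev a)
  · intro a ha
    rw [Finset.mem_filter] at ha ⊢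
    obtain ⟨-, hfa, hsa⟩ := ha
    refine ⟨Finset.mem_univ _, ?_, ?_⟩
    · rw [h4, hfa]
    · rw [h5 a hfa, hsa]; rfl
  · intro a ha
    rw [Finset.mem_filter] at ha ⊢
    obtain ⟨-, hfa, hsa⟩ := ha
    refine ⟨Finset.mem_univ _, ?_, ?_⟩
    · rw [h4, hfa]
    · rw [h5 a hfa, hsa]; rfl
  · intro a _; exact Fin.rev_rev a
  · intro a _; exact Fin.rev_rev a

def clanEquivModel (n : ℕ) :
    {p : Equiv.Perm (Fin (2 * n)) × (Fin (2 * n) → Bool) // IsSkewClan n p.1 p.2} ≃ Model n where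
  toFun p := ⟨(SCg ⇑p.1.1 p.1.2, SCpi ⇑p.1.1), by
    obtain ⟨⟨σ, s⟩, h1, h2, h3, h4, h5⟩ := p
    exact ⟨enc_pi_invol ⇑σ h1 h4, enc_g34 ⇑σ s h1 h4, enc_g43 ⇑σ s h1 h4, enc_pi_id ⇑σ s⟩⟩
  invFun q := ⟨(Function.Involutive.toPerm _ (dec_invol q.1.1 q.1.2 q.2), SCs q.1.1), by
    obtain ⟨⟨g, π⟩, hm⟩ := q
    refine ⟨dec_invol g π hm, ?_, ?_, ?_, ?_⟩
    · intro x hx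
      exact dec_norm g π x (by simpa [Function.Involutive.coe_toPerm] using hx)
    · apply balance
      · intro x
        simp only [Function.Involutive.coe_toPerm]
        exact dec_equiv g π x
      · intro x hx
        exact dec_flip g π hm x (by simpa [Function.Involutive.coe_toPerm] using hx)
    · intro x
      simp only [Function.Involutive.coe_toPerm]
      exact dec_equiv g π x
    · intro x hx
      exact dec_flip g π hm x (by simpa [Function.Involutive.coe_toPerm] using hx)⟩
  left_inv p := by
    obtain ⟨⟨σ, s⟩, h1, h2, h3, h4, h5⟩ := p
    apply Subtype.ext
    apply Prod.ext
    · apply Equiv.ext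
      intro x
      simp only [Function.Involutive.coe_toPerm]
      exact sigma_encode ⇑σ s h4 x
    · funext x
      exact s_encode ⇑σ s h2 h4 h5 x
  right_inv q := by
    obtain ⟨⟨g, π⟩, hm⟩ := q
    apply Subtype.ext
    apply Prod.ext
    · funext i
      exact g_decode g π hm i
    · funext i
      exact pi_decode g π hm i

lemma Znum_eq_card (n : ℕ) : Znum n = Fintype.card (Model n) := by
  rw [Znum, Nat.card_congr (clanEquivModel n), Nat.card_eq_fintype_card]

/- ## Counting the model -/

def modelSigma (n : ℕ) : Model n ≃ Σ g : Fin n → Fin 5, {π : Fin n → Fin n // IsModel n g π} where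
  toFun q := ⟨q.1.1, q.1.2, q.2⟩
  invFun q := ⟨(q.1, q.2.1), q.2.2⟩
  left_inv q := rfl
  right_inv q := rfl

def piEquiv {n : ℕ} (g : Fin n → Fin 5) :
    {π : Fin n → Fin n // IsModel n g π} ≃ ({i // g i = 3} ≃ {i // g i = 4}) where
  toFun p :=
    { toFun := fun x => ⟨p.1 x.1, p.2.2.1 x.1 x.2⟩
      invFun := fun x => ⟨p.1 x.1, p.2.2.2.1 x.1 x.2⟩
      left_inv := fun x => Subtype.ext (by simp only [p.2.1])
      right_inv := fun x => Subtype.ext (by simp only [p.2.1]) }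
  invFun e := ⟨fun i => if h3 : g i = 3 then (e ⟨i, h3⟩).1
      else if h4 : g i = 4 then (e.symm ⟨i, h4⟩).1 else i, by
    refine ⟨?_, ?_, ?_, ?_⟩
    · intro i
      dsimp only
      by_cases h3 : g i = 3
      · rw [dif_pos h3]
        have h4' : g ((e ⟨i, h3⟩).1) = 4 := (e ⟨i, h3⟩).2
        rw [dif_neg (by rw [h4']; decide), dif_pos h4', Subtype.coe_eta,
          Equiv.symm_apply_apply]
      · by_cases h4 : g i = 4
        · rw [dif_neg h3, dif_pos h4]
          have h3' : g ((e.symm ⟨i, h4⟩).1) = 3 := (e.symm ⟨i, h4⟩).2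
          rw [dif_pos h3', Subtype.coe_eta, Equiv.apply_symm_apply]
        · rw [dif_neg h3, dif_neg h4, dif_neg h3, dif_neg h4]
    · intro i h3
      dsimp only
      rw [dif_pos h3]
      exact (e ⟨i, h3⟩).2
    · intro i h4
      dsimp only
      rw [dif_neg (by rw [h4]; decide), dif_pos h4]
      exact (e.symm ⟨i, h4⟩).2
    · intro i h3 h4
      dsimp only
      rw [dif_neg h3, dif_neg h4]⟩
  left_inv p := by
    apply Subtype.ext
    funext i
    by_cases h3 : g i = 3
    · simp only [dif_pos h3]
      rfl
    · by_cases h4 : g i = 4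
      · simp only [dif_neg h3, dif_pos h4]
        rfl
      · simp only [dif_neg h3, dif_neg h4]
        exact (p.2.2.2.2 i h3 h4).symm
  right_inv e := by
    apply Equiv.ext
    intro x
    apply Subtype.ext
    simp only [Equiv.coe_fn_mk]
    rw [dif_pos x.2, Subtype.coe_eta]

lemma card_equiv_aux (α β : Type) [Fintype α] [Fintype β] [DecidableEq α] [DecidableEq β] :
    Fintype.card (α ≃ β) =
      if Fintype.card α = Fintype.card β then (Fintype.card α).factorial else 0 := by
  split_ifs with h
  · exact Fintype.card_equiv (Fintype.equivOfCardEq h)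
  · rw [Fintype.card_eq_zero_iff]
    exact ⟨fun e => h (Fintype.card_congr e)⟩

lemma card_model (n : ℕ) :
    Fintype.card (Model n) = ∑ g : Fin n → Fin 5,
      (if (Finset.univ.filter fun i => g i = 3).card = (Finset.univ.filter fun i => g i = 4).card
        then ((Finset.univ.filter fun i => g i = 3).card).factorial else 0) := by
  rw [Fintype.card_congr (modelSigma n), Fintype.card_sigma]
  apply Finset.sum_congr rfl
  intro g _
  rw [Fintype.card_congr (piEquiv g), card_equiv_aux, Fintype.card_subtype, Fintype.card_subtype]

open Finset in
def fiberEquiv {n : ℕ} (A B : Finset (Fin n)) (hd : Disjoint A B) :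
    {g : Fin n → Fin 5 //
      (univ.filter fun i => g i = 3) = A ∧ (univ.filter fun i => g i = 4) = B} ≃
      ({i : Fin n // i ∉ A ∧ i ∉ B} → Fin 3) where
  toFun p x := ⟨min (p.1 x.1).1 2, by omega⟩
  invFun c := ⟨fun i => if hA : i ∈ A then 3 else if hB : i ∈ B then 4
      else ⟨(c ⟨i, hA, hB⟩).1, by have := (c ⟨i, hA, hB⟩).2; omega⟩, by
    constructor
    · ext i
      simp only [mem_filter, mem_univ, true_and]
      by_cases hA : i ∈ A
      · rw [dif_pos hA]; simp [hA]
      · by_cases hB : i ∈ B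
        · rw [dif_neg hA, dif_pos hB]
          simp only [hA, iff_false]
          decide
        · rw [dif_neg hA, dif_neg hB]
          simp only [hA, iff_false]
          intro hc
          have := congrArg Fin.val hc
          simp only [Fin.val_mk] at this
          have := (c ⟨i, hA, hB⟩).2
          omega
    · ext i
      simp only [mem_filter, mem_univ, true_and]
      by_cases hA : i ∈ A
      · rw [dif_pos hA]
        simp only [Finset.disjoint_left.mp hd hA, iff_false]
        decide
      · by_cases hB : i ∈ B
        · rw [dif_neg hA, dif_pos hB]; simp [hB]
        · rw [dif_neg hA, dif_neg hB]
          simp only [hB, iff_false]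
          intro hc
          have := congrArg Fin.val hc
          simp only [Fin.val_mk] at this
          have := (c ⟨i, hA, hB⟩).2
          omega⟩
  left_inv p := by
    apply Subtype.ext
    funext i
    dsimp only
    by_cases hA : i ∈ A
    · rw [dif_pos hA]
      have h3 : p.1 i = 3 := by
        have := p.2.1
        rw [← this, mem_filter] at hA
        exact hA.2
      exact h3.symm
    · by_cases hB : i ∈ B
      · rw [dif_neg hA, dif_pos hB]
        have h4 : p.1 i = 4 := by
          have := p.2.2
          rw [← this, mem_filter] at hB
          exact hB.2
        exact h4.symm
      · rw [dif_neg hA, dif_neg hB]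
        have h3 : (p.1 i).1 ≠ 3 := by
          intro hc
          exact hA (by rw [← p.2.1, mem_filter]; exact ⟨mem_univ _, Fin.ext hc⟩)
        have h4 : (p.1 i).1 ≠ 4 := by
          intro hc
          exact hB (by rw [← p.2.2, mem_filter]; exact ⟨mem_univ _, Fin.ext hc⟩)
        have h5 := (p.1 i).2
        apply Fin.ext
        simp only [Fin.val_mk]
        omega
  right_inv c := by
    funext x
    obtain ⟨i, hA, hB⟩ := x
    apply Fin.ext
    simp only [Fin.val_mk, dif_neg hA, dif_neg hB]
    have := (c ⟨i, hA, hB⟩).2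
    omega

open Finset in
lemma fiber_card {n : ℕ} (p : Finset (Fin n) × Finset (Fin n)) :
    (univ.filter fun g : Fin n → Fin 5 =>
        ((univ.filter fun i => g i = 3), (univ.filter fun i => g i = 4)) = p).card =
      if Disjoint p.1 p.2 then 3 ^ (n - p.1.card - p.2.card) else 0 := by
  obtain ⟨A, B⟩ := p
  split_ifs with hd
  · have : (univ.filter fun g : Fin n → Fin 5 =>
        ((univ.filter fun i => g i = 3), (univ.filter fun i => g i = 4)) = (A, B)) =
        (univ.filter fun g : Fin n → Fin 5 =>
        (univ.filter fun i => g i = 3) = A ∧ (univ.filter fun i => g i = 4) = B) := by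
      apply Finset.filter_congr
      intro g _
      rw [Prod.mk.injEq]
    rw [this, ← Fintype.card_subtype, Fintype.card_congr (fiberEquiv A B hd),
      Fintype.card_fun, Fintype.card_fin, Fintype.card_subtype]
    congr 1
    have hcompl : (univ.filter fun i : Fin n => i ∉ A ∧ i ∉ B) = (A ∪ B)ᶜ := by
      ext i
      simp [Finset.mem_compl, Finset.mem_union]
    rw [hcompl, Finset.card_compl, Finset.card_union_of_disjoint hd, Fintype.card_fin]
    omega
  · rw [Finset.card_eq_zero, Finset.filter_eq_empty_iff]
    intro g _
    rw [Prod.mk.injEq]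
    rintro ⟨hA, hB⟩
    apply hd
    rw [← hA, ← hB]
    rw [Finset.disjoint_left]
    intro a ha3 ha4
    rw [mem_filter] at ha3 ha4
    rw [ha3.2] at ha4
    exact absurd ha4.2 (by decide)

open Finset in
lemma sum_count (n : ℕ) :
    (∑ g : Fin n → Fin 5,
      if (univ.filter fun i => g i = 3).card = (univ.filter fun i => g i = 4).card
        then ((univ.filter fun i => g i = 3).card).factorial else 0) =
    ∑ b ∈ range (n + 1),
      n.choose b * ((n - b).choose b) * b.factorial * 3 ^ (n - 2 * b) := by
  classical
  rw [← Finset.sum_fiberwise (Finset.univ : Finset (Fin n → Fin 5))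
    (fun g => ((univ.filter fun i => g i = 3), (univ.filter fun i => g i = 4)))
    (fun g => if (univ.filter fun i => g i = 3).card = (univ.filter fun i => g i = 4).card
        then ((univ.filter fun i => g i = 3).card).factorial else 0)]
  have step1 : ∀ p : Finset (Fin n) × Finset (Fin n),
      (∑ g ∈ univ.filter (fun g : Fin n → Fin 5 =>
          ((univ.filter fun i => g i = 3), (univ.filter fun i => g i = 4)) = p),
        if (univ.filter fun i => g i = 3).card = (univ.filter fun i => g i = 4).card
          then ((univ.filter fun i => g i = 3).card).factorial else 0) =
      (if Disjoint p.1 p.2 then 3 ^ (n - p.1.card - p.2.card) else 0) *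
        (if p.1.card = p.2.card then (p.1.card).factorial else 0) := by
    intro p
    rw [Finset.sum_congr rfl (g := fun _ =>
        if p.1.card = p.2.card then (p.1.card).factorial else 0)
      (fun g hg => by
        rw [mem_filter, Prod.mk.injEq] at hg
        rw [hg.2.1, hg.2.2]),
      Finset.sum_const, fiber_card, smul_eq_mul]
  rw [Finset.sum_congr rfl (fun p _ => step1 p)]
  rw [Fintype.sum_prod_type]
  have step2 : ∀ A : Finset (Fin n),
      (∑ B : Finset (Fin n),
        (if Disjoint A B then 3 ^ (n - A.card - B.card) else 0) *
          (if A.card = B.card then (A.card).factorial else 0)) =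
      (n - A.card).choose A.card * (3 ^ (n - 2 * A.card) * (A.card).factorial) := by
    intro A
    have hA := (Finset.card_le_univ A)
    rw [Finset.sum_congr rfl (g := fun B =>
        if Disjoint A B ∧ B.card = A.card
          then 3 ^ (n - 2 * A.card) * (A.card).factorial else 0)
      (fun B _ => by
        by_cases h1 : Disjoint A B
        · by_cases h2 : B.card = A.card
          · rw [if_pos h1, if_pos h2.symm, if_pos ⟨h1, h2⟩]
            have he : n - A.card - B.card = n - 2 * A.card := by omega
            rw [he]
          · rw [if_pos h1, if_neg (fun hc => h2 hc.symm),
              if_neg (fun hc => h2 hc.2), mul_zero]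
        · rw [if_neg h1, zero_mul,
            if_neg (fun hc : Disjoint A B ∧ B.card = A.card => h1 hc.1)])]
    rw [← Finset.sum_filter]
    have hfil : (univ.filter fun B : Finset (Fin n) => Disjoint A B ∧ B.card = A.card) =
        Finset.powersetCard A.card Aᶜ := by
      ext B
      rw [mem_filter, Finset.mem_powersetCard]
      constructor
      · rintro ⟨-, hd, hc⟩
        refine ⟨?_, hc⟩
        intro x hx
        rw [Finset.mem_compl]
        exact Finset.disjoint_right.mp hd hx
      · rintro ⟨hsub, hc⟩
        refine ⟨mem_univ _, ?_, hc⟩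
        rw [Finset.disjoint_right]
        intro a ha
        have := hsub ha
        rwa [Finset.mem_compl] at this
    rw [hfil, Finset.sum_const, Finset.card_powersetCard, Finset.card_compl,
      Fintype.card_fin, smul_eq_mul]
  rw [Finset.sum_congr rfl (fun A _ => step2 A)]
  rw [← Finset.powerset_univ, Finset.sum_powerset]
  rw [Finset.card_univ, Fintype.card_fin]
  apply Finset.sum_congr rfl
  intro b hb
  rw [Finset.sum_congr rfl (g := fun A =>
      (n - b).choose b * (3 ^ (n - 2 * b) * b.factorial))
    (fun A hA => by
      rw [Finset.mem_powersetCard] at hA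
      rw [hA.2]),
    Finset.sum_const, Finset.card_powersetCard, Finset.card_univ, Fintype.card_fin,
    smul_eq_mul]
  ring

/- ## The algebraic identity -/

lemma fdiv_eq (b : ℕ) :
    Nat.factorial (2 * b) / Nat.factorial b = Nat.choose (2 * b) b * Nat.factorial b := by
  apply Nat.div_eq_of_eq_mul_left (Nat.factorial_pos b)
  have h := Nat.choose_mul_factorial_mul_factorial (show b ≤ 2 * b by omega)
  rw [show 2 * b - b = b by omega] at h
  rw [← h]

lemma aseq_eq (k : ℕ) : aseq k = ∑ b ∈ Finset.range (k / 2 + 1),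
    Nat.choose k (2 * b) * (Nat.choose (2 * b) b * Nat.factorial b) := by
  unfold aseq
  exact Finset.sum_congr rfl fun b _ => by rw [fdiv_eq]

open Finset in
lemma step3 (n : ℕ) :
    ∑ k ∈ range (n + 1), 2 ^ (n - k) * Nat.choose n k * aseq k =
    ∑ b ∈ range (n + 1),
      Nat.choose n b * Nat.choose (n - b) b * Nat.factorial b * 3 ^ (n - 2 * b) := by
  have hext : ∀ k ∈ range (n + 1), 2 ^ (n - k) * Nat.choose n k * aseq k =
      ∑ b ∈ range (n + 1),
        2 ^ (n - k) * Nat.choose n k * (Nat.choose k (2 * b) *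
          (Nat.choose (2 * b) b * Nat.factorial b)) := by
    intro k hk
    rw [mem_range] at hk
    rw [aseq_eq, Finset.mul_sum]
    apply Finset.sum_subset
    · intro b hb
      rw [mem_range] at hb ⊢
      omega
    · intro b _ hb
      rw [mem_range] at hb
      have h0 : Nat.choose k (2 * b) = 0 := Nat.choose_eq_zero_of_lt (by omega)
      rw [h0, zero_mul, mul_zero]
  rw [Finset.sum_congr rfl hext, Finset.sum_comm]
  apply Finset.sum_congr rfl
  intro b hb
  rw [mem_range] at hb
  by_cases h2b : 2 * b ≤ n
  · have hstep : (∑ k ∈ range (n + 1),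
        2 ^ (n - k) * Nat.choose n k * (Nat.choose k (2 * b) *
          (Nat.choose (2 * b) b * Nat.factorial b))) =
        ∑ k ∈ Finset.Ico (2 * b) (n + 1),
        2 ^ (n - k) * Nat.choose n k * (Nat.choose k (2 * b) *
          (Nat.choose (2 * b) b * Nat.factorial b)) := by
      symm
      apply Finset.sum_subset
      · intro k hk
        rw [Finset.mem_Ico] at hk
        rw [mem_range]
        omega
      · intro k hk hnk
        rw [mem_range] at hk
        rw [Finset.mem_Ico] at hnk
        have h0 : Nat.choose k (2 * b) = 0 := Nat.choose_eq_zero_of_lt (by omega)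
        rw [h0, zero_mul, mul_zero]
    rw [hstep, Finset.sum_Ico_eq_sum_range]
    have hterm : ∀ j ∈ range (n + 1 - 2 * b),
        2 ^ (n - (2 * b + j)) * Nat.choose n (2 * b + j) * (Nat.choose (2 * b + j) (2 * b) *
          (Nat.choose (2 * b) b * Nat.factorial b)) =
        (Nat.choose n (2 * b) * (Nat.choose (2 * b) b * Nat.factorial b)) *
          (2 ^ (n - 2 * b - j) * Nat.choose (n - 2 * b) j) := by
      intro j hj
      rw [mem_range] at hj
      have hc : Nat.choose n (2 * b + j) * Nat.choose (2 * b + j) (2 * b) =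
          Nat.choose n (2 * b) * Nat.choose (n - 2 * b) (2 * b + j - 2 * b) :=
        Nat.choose_mul (show 2 * b ≤ 2 * b + j by omega)
      rw [show 2 * b + j - 2 * b = j by omega] at hc
      have he : n - (2 * b + j) = n - 2 * b - j := by omega
      rw [he]
      calc 2 ^ (n - 2 * b - j) * Nat.choose n (2 * b + j) *
            (Nat.choose (2 * b + j) (2 * b) * (Nat.choose (2 * b) b * Nat.factorial b))
          = (Nat.choose n (2 * b + j) * Nat.choose (2 * b + j) (2 * b)) *
            (2 ^ (n - 2 * b - j) * (Nat.choose (2 * b) b * Nat.factorial b)) := by ring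
        _ = (Nat.choose n (2 * b) * Nat.choose (n - 2 * b) j) *
            (2 ^ (n - 2 * b - j) * (Nat.choose (2 * b) b * Nat.factorial b)) := by rw [hc]
        _ = (Nat.choose n (2 * b) * (Nat.choose (2 * b) b * Nat.factorial b)) *
            (2 ^ (n - 2 * b - j) * Nat.choose (n - 2 * b) j) := by ring
    rw [show n + 1 - 2 * b = (n - 2 * b) + 1 by omega] at hterm ⊢
    rw [Finset.sum_congr rfl hterm, ← Finset.mul_sum]
    have hpow := add_pow (1 : ℕ) 2 (n - 2 * b)
    norm_num at hpow
    rw [← hpow]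
    have hid : Nat.choose n (2 * b) * Nat.choose (2 * b) b =
        Nat.choose n b * Nat.choose (n - b) (2 * b - b) :=
      Nat.choose_mul (show b ≤ 2 * b by omega)
    rw [show 2 * b - b = b by omega] at hid
    calc Nat.choose n (2 * b) * (Nat.choose (2 * b) b * Nat.factorial b) * 3 ^ (n - 2 * b)
        = (Nat.choose n (2 * b) * Nat.choose (2 * b) b) *
            (Nat.factorial b * 3 ^ (n - 2 * b)) := by ring
      _ = (Nat.choose n b * Nat.choose (n - b) b) *
            (Nat.factorial b * 3 ^ (n - 2 * b)) := by rw [hid]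
      _ = Nat.choose n b * Nat.choose (n - b) b * Nat.factorial b * 3 ^ (n - 2 * b) := by ring
  · have hz : Nat.choose (n - b) b = 0 := Nat.choose_eq_zero_of_lt (by omega)
    rw [hz, mul_zero, zero_mul, zero_mul]
    apply Finset.sum_eq_zero
    intro k hk
    rw [mem_range] at hk
    have h0 : Nat.choose k (2 * b) = 0 := Nat.choose_eq_zero_of_lt (by omega)
    rw [h0, zero_mul, mul_zero]


/-- `Z_n = Σ_{k=0}^{n} 2^(n−k)·C(n,k)·a_k`. -/
theorem stmt3 (n : ℕ) :
    Znum n = ∑ k ∈ Finset.range (n + 1), 2 ^ (n - k) * Nat.choose n k * aseq k := by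
  rw [Znum_eq_card, card_model, sum_count, ← step3]
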